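/- The subgroup N₄ₐ := {(δ,ρ̄,γ̄,β̄) ∈ ℤ^4 : δ+ρ̄+γ̄+β̄ = 0 and δ−ρ̄−γ̄−β̄ = 0} equals {(δ,ρ̄,γ̄,β̄) ∈ ℤ^4 : δ = 0 and ρ̄+γ̄+β̄ = 0}, and exactly six elements of the 42-element set R of ray generators lie in N₄ₐ, namely ±(0,1,−1,0), ±(0,0,1,−1), ±(0,−1,0,1); all six lie in the orbit O_D of (0,1,0,1) (i.e. all are of type D). Hence the fan F₄ₐ = F₆ ∩ N₄ₐ has exactly 6 rays, all of type D. -/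

import Mathlib

/- The linear action of `Γ₆` on `ℤ^4`, with coordinates `(δ,ρ̄,γ̄,β̄)`. -/

/-- `c·(δ,ρ̄,γ̄,β̄) = (δ,β̄,ρ̄,γ̄)`: cyclic permutation of the last three coordinates. -/
def cP : Equiv.Perm (Fin 4 → ℤ) where
  toFun v := ![v 0, v 3, v 1, v 2]
  invFun v := ![v 0, v 2, v 3, v 1]
  left_inv v := by funext i; fin_cases i <;> rfl
  right_inv v := by funext i; fin_cases i <;> rfl

/-- `s_r` negates `ρ̄`, fixing the other coordinates. -/
def srP : Equiv.Perm (Fin 4 → ℤ) where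
  toFun v := ![v 0, -v 1, v 2, v 3]
  invFun v := ![v 0, -v 1, v 2, v 3]
  left_inv v := by funext i; fin_cases i <;> simp
  right_inv v := by funext i; fin_cases i <;> simp

/-- `s_g` negates `γ̄`, fixing the other coordinates. -/
def sgP : Equiv.Perm (Fin 4 → ℤ) where
  toFun v := ![v 0, v 1, -v 2, v 3]
  invFun v := ![v 0, v 1, -v 2, v 3]
  left_inv v := by funext i; fin_cases i <;> simp
  right_inv v := by funext i; fin_cases i <;> simp

/-- `s_b` negates `β̄`, fixing the other coordinates. -/
def sbP : Equiv.Perm (Fin 4 → ℤ) where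
  toFun v := ![v 0, v 1, v 2, -v 3]
  invFun v := ![v 0, v 1, v 2, -v 3]
  left_inv v := by funext i; fin_cases i <;> simp
  right_inv v := by funext i; fin_cases i <;> simp

/-- `Cr` negates all four coordinates. -/
def crP : Equiv.Perm (Fin 4 → ℤ) := Equiv.neg (Fin 4 → ℤ)

/-- The group `Γ₆` acting linearly on `ℤ^4`, generated by `c, s_r, s_g, s_b, Cr`. -/
def Γ6lin : Subgroup (Equiv.Perm (Fin 4 → ℤ)) :=
  Subgroup.closure {cP, srP, sgP, sbP, crP}

/-- The orbit `O_A` of `A = (2,0,0,0)`. -/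
def OA : Set (Fin 4 → ℤ) := MulAction.orbit Γ6lin ![2, 0, 0, 0]
/-- The orbit `O_B` of `B = (1,1,0,0)`. -/
def OB : Set (Fin 4 → ℤ) := MulAction.orbit Γ6lin ![1, 1, 0, 0]
/-- The orbit `O_C` of `C = (1,1,1,1)`. -/
def OC : Set (Fin 4 → ℤ) := MulAction.orbit Γ6lin ![1, 1, 1, 1]
/-- The orbit `O_D` of `D = (0,1,0,1)`. -/
def OD : Set (Fin 4 → ℤ) := MulAction.orbit Γ6lin ![0, 1, 0, 1]

/-- The set `R` of integral generators of the rays of the fan `F₆`. -/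
def RaySet : Set (Fin 4 → ℤ) := OA ∪ OB ∪ OC ∪ OD

/-- `N₄ₐ`, the cocharacter lattice of the subtorus `T₄ₐ ⊂ T₆` defined by
`r₁g₁b₁ = r₂g₂b₂ = 1`: `{(δ,ρ̄,γ̄,β̄) : δ = 0 and ρ̄+γ̄+β̄ = 0}`. -/
def N4a : Set (Fin 4 → ℤ) := {v | v 0 = 0 ∧ v 1 + v 2 + v 3 = 0}


/-! ### Auxiliary material -/

def FA : Finset (Fin 4 → ℤ) := {![2,0,0,0], ![-2,0,0,0]}

def FB : Finset (Fin 4 → ℤ) :=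
  {![1,1,0,0], ![1,-1,0,0], ![1,0,1,0], ![1,0,-1,0], ![1,0,0,1], ![1,0,0,-1],
   ![-1,1,0,0], ![-1,-1,0,0], ![-1,0,1,0], ![-1,0,-1,0], ![-1,0,0,1], ![-1,0,0,-1]}

def FC : Finset (Fin 4 → ℤ) :=
  {![1,1,1,1], ![1,1,1,-1], ![1,1,-1,1], ![1,1,-1,-1],
   ![1,-1,1,1], ![1,-1,1,-1], ![1,-1,-1,1], ![1,-1,-1,-1],
   ![-1,1,1,1], ![-1,1,1,-1], ![-1,1,-1,1], ![-1,1,-1,-1],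
   ![-1,-1,1,1], ![-1,-1,1,-1], ![-1,-1,-1,1], ![-1,-1,-1,-1]}

def FD : Finset (Fin 4 → ℤ) :=
  {![0,1,1,0], ![0,1,-1,0], ![0,-1,1,0], ![0,-1,-1,0],
   ![0,0,1,1], ![0,0,1,-1], ![0,0,-1,1], ![0,0,-1,-1],
   ![0,1,0,1], ![0,1,0,-1], ![0,-1,0,1], ![0,-1,0,-1]}

def FT : Finset (Fin 4 → ℤ) :=
  {![0,1,-1,0], ![0,-1,1,0], ![0,0,1,-1], ![0,0,-1,1], ![0,-1,0,1], ![0,1,0,-1]}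

lemma orbit_subset_of_invariant {x : Fin 4 → ℤ} {F : Finset (Fin 4 → ℤ)} (hx : x ∈ F)
    (h1 : ∀ v ∈ F, cP v ∈ F) (h2 : ∀ v ∈ F, srP v ∈ F) (h3 : ∀ v ∈ F, sgP v ∈ F)
    (h4 : ∀ v ∈ F, sbP v ∈ F) (h5 : ∀ v ∈ F, crP v ∈ F) :
    MulAction.orbit Γ6lin x ⊆ ↑F := by
  have key : ∀ g ∈ Γ6lin, ∀ v ∈ F, g v ∈ F := by
    intro g hg
    induction hg using Subgroup.closure_induction with
    | mem y hy =>
      simp only [Set.mem_insert_iff, Set.mem_singleton_iff] at hy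
      rcases hy with rfl | rfl | rfl | rfl | rfl <;> assumption
    | one => intro v hv; simpa using hv
    | mul a b ha hb iha ihb =>
      intro v hv
      have : (a * b) v = a (b v) := rfl
      rw [this]
      exact iha _ (ihb _ hv)
    | inv a ha ih =>
      have himg : F.image a = F := by
        apply Finset.eq_of_subset_of_card_le
        · intro v hv
          obtain ⟨w, hw, rfl⟩ := Finset.mem_image.mp hv
          exact ih w hw
        · rw [Finset.card_image_of_injective _ a.injective]
      intro v hv
      rw [← himg] at hv
      obtain ⟨w, hw, rfl⟩ := Finset.mem_image.mp hv
      simpa using hw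
  rintro _ ⟨⟨g, hg⟩, rfl⟩
  exact key g hg x hx

lemma mem_OD_of {v : Fin 4 → ℤ} (g : Equiv.Perm (Fin 4 → ℤ)) (hg : g ∈ Γ6lin)
    (h : g ![0,1,0,1] = v) : v ∈ OD := ⟨⟨g, hg⟩, h⟩

lemma cP_mem : cP ∈ Γ6lin := Subgroup.subset_closure (by left; rfl)
lemma srP_mem : srP ∈ Γ6lin := Subgroup.subset_closure (by right; left; rfl)
lemma sgP_mem : sgP ∈ Γ6lin := Subgroup.subset_closure (by right; right; left; rfl)
lemma sbP_mem : sbP ∈ Γ6lin := Subgroup.subset_closure (by right; right; right; left; rfl)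

lemma hOA : OA ⊆ ↑FA :=
  orbit_subset_of_invariant (by decide) (by decide) (by decide) (by decide) (by decide) (by decide)
lemma hOB : OB ⊆ ↑FB :=
  orbit_subset_of_invariant (by decide) (by decide) (by decide) (by decide) (by decide) (by decide)
lemma hOC : OC ⊆ ↑FC :=
  orbit_subset_of_invariant (by decide) (by decide) (by decide) (by decide) (by decide) (by decide)
lemma hOD : OD ⊆ ↑FD :=
  orbit_subset_of_invariant (by decide) (by decide) (by decide) (by decide) (by decide) (by decide)

set_option maxRecDepth 100000 in
lemma filter_lemma : ∀ v ∈ FA ∪ FB ∪ FC ∪ FD,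
    v 0 = 0 → v 1 + v 2 + v 3 = 0 → v ∈ FT := by decide

/-- `{δ+ρ̄+γ̄+β̄ = 0, δ−ρ̄−γ̄−β̄ = 0}` equals `{δ = 0, ρ̄+γ̄+β̄ = 0}`, and exactly
six of the 42 ray generators lie in it, namely `±(0,1,−1,0), ±(0,0,1,−1),
±(0,−1,0,1)`, all of type D. Hence `F₄ₐ = F₆ ∩ N₄ₐ` has exactly 6 rays, all of
type D. -/
theorem rays_in_N4a :
    {v : Fin 4 → ℤ | v 0 + v 1 + v 2 + v 3 = 0 ∧ v 0 - v 1 - v 2 - v 3 = 0} = N4a ∧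
    RaySet ∩ N4a =
      {![(0 : ℤ), 1, -1, 0], ![(0 : ℤ), -1, 1, 0],
       ![(0 : ℤ), 0, 1, -1], ![(0 : ℤ), 0, -1, 1],
       ![(0 : ℤ), -1, 0, 1], ![(0 : ℤ), 1, 0, -1]} ∧
    ![(0 : ℤ), 1, -1, 0] ∈ OD ∧ ![(0 : ℤ), -1, 1, 0] ∈ OD ∧
    ![(0 : ℤ), 0, 1, -1] ∈ OD ∧ ![(0 : ℤ), 0, -1, 1] ∈ OD ∧
    ![(0 : ℤ), -1, 0, 1] ∈ OD ∧ ![(0 : ℤ), 1, 0, -1] ∈ OD ∧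
    (RaySet ∩ N4a).ncard = 6 := by
  have hd1 : ![(0 : ℤ), 1, -1, 0] ∈ OD := mem_OD_of (sgP * cP) (mul_mem sgP_mem cP_mem) (by decide)
  have hd2 : ![(0 : ℤ), -1, 1, 0] ∈ OD := mem_OD_of (srP * cP) (mul_mem srP_mem cP_mem) (by decide)
  have hd3 : ![(0 : ℤ), 0, 1, -1] ∈ OD :=
    mem_OD_of (sbP * cP * cP) (mul_mem (mul_mem sbP_mem cP_mem) cP_mem) (by decide)
  have hd4 : ![(0 : ℤ), 0, -1, 1] ∈ OD :=
    mem_OD_of (sgP * cP * cP) (mul_mem (mul_mem sgP_mem cP_mem) cP_mem) (by decide)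
  have hd5 : ![(0 : ℤ), -1, 0, 1] ∈ OD := mem_OD_of srP srP_mem (by decide)
  have hd6 : ![(0 : ℤ), 1, 0, -1] ∈ OD := mem_OD_of sbP sbP_mem (by decide)
  have hTS : (↑FT : Set (Fin 4 → ℤ)) =
      {![(0 : ℤ), 1, -1, 0], ![(0 : ℤ), -1, 1, 0],
       ![(0 : ℤ), 0, 1, -1], ![(0 : ℤ), 0, -1, 1],
       ![(0 : ℤ), -1, 0, 1], ![(0 : ℤ), 1, 0, -1]} := by
    simp [FT]
  have hinter : RaySet ∩ N4a = ↑FT := by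
    apply Set.Subset.antisymm
    · rintro v ⟨hR, h0, hsum⟩
      have hv : v ∈ FA ∪ FB ∪ FC ∪ FD := by
        rcases hR with ((hA | hB) | hC) | hD
        · exact Finset.mem_union_left _ (Finset.mem_union_left _ (Finset.mem_union_left _ (hOA hA)))
        · exact Finset.mem_union_left _ (Finset.mem_union_left _ (Finset.mem_union_right _ (hOB hB)))
        · exact Finset.mem_union_left _ (Finset.mem_union_right _ (hOC hC))
        · exact Finset.mem_union_right _ (hOD hD)
      exact filter_lemma v hv h0 hsum
    · intro v hv
      rw [hTS] at hv
      simp only [Set.mem_insert_iff, Set.mem_singleton_iff] at hv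
      rcases hv with rfl | rfl | rfl | rfl | rfl | rfl
      · exact ⟨Or.inr hd1, by constructor <;> decide⟩
      · exact ⟨Or.inr hd2, by constructor <;> decide⟩
      · exact ⟨Or.inr hd3, by constructor <;> decide⟩
      · exact ⟨Or.inr hd4, by constructor <;> decide⟩
      · exact ⟨Or.inr hd5, by constructor <;> decide⟩
      · exact ⟨Or.inr hd6, by constructor <;> decide⟩
  refine ⟨?_, by rw [hinter, hTS], hd1, hd2, hd3, hd4, hd5, hd6, ?_⟩
  · ext v
    simp only [Set.mem_setOf_eq, N4a]
    omega
  · rw [hinter, Set.ncard_coe_finset]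
    decide
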